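/- Let n > m > ℓ ≥ 2 be integers and let H = ⟨a, b, c | a^(2^n) = 1, b^(2^m) = a^(2^m), c^(2^ℓ) = 1, [b,a] = c, [c,a] = c^(-2), [c,b] = c^(-2)⟩. Let S be a commutative ring of characteristic 4 with a maximal ideal n satisfying 2 ∈ n and 2 ∉ n². Set A = a − 1, B = b − 1, C = c − 1 in SH and Θ = Δ(SH : n). Then for all α, β ∈ S one has (αA + βB)⁴ ≡ α⁴A⁴ + β⁴B⁴ + α²β²C² (mod Θ⁵). -/

import Mathlib

/-- Relators of the group `H` from the paper:
`H = ⟨a,b,c ∣ a^(2^n) = 1, b^(2^m) = a^(2^m), c^(2^l) = 1, [b,a] = c, [c,a] = c⁻², [c,b] = c⁻²⟩`,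
where `[g,h] = g⁻¹h⁻¹gh`.  Generators: `0 ↦ a`, `1 ↦ b`, `2 ↦ c`. -/
def hrels (n m l : ℕ) : Set (FreeGroup (Fin 3)) :=
  {FreeGroup.of 0 ^ 2 ^ n, FreeGroup.of 1 ^ 2 ^ m * (FreeGroup.of 0 ^ 2 ^ m)⁻¹,
   FreeGroup.of 2 ^ 2 ^ l,
   (FreeGroup.of 1)⁻¹ * (FreeGroup.of 0)⁻¹ * FreeGroup.of 1 * FreeGroup.of 0 * (FreeGroup.of 2)⁻¹,
   (FreeGroup.of 2)⁻¹ * (FreeGroup.of 0)⁻¹ * FreeGroup.of 2 * FreeGroup.of 0 * FreeGroup.of 2 ^ 2,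
   (FreeGroup.of 2)⁻¹ * (FreeGroup.of 1)⁻¹ * FreeGroup.of 2 * FreeGroup.of 1 * FreeGroup.of 2 ^ 2}

/-- The group `H` of the paper. -/
def GrpH (n m l : ℕ) : Type := PresentedGroup (hrels n m l)

instance (n m l : ℕ) : Group (GrpH n m l) := by unfold GrpH; infer_instance

/-- The augmentation map `ε : SH → S`, sending `Σ α_h h` to `Σ α_h`. -/
noncomputable def aug (S : Type) [CommRing S] (G : Type) [Group G] :
    MonoidAlgebra S G →ₐ[S] S := MonoidAlgebra.lift S S G 1

/-- The relative augmentation ideal `Δ(SG : n) = ε⁻¹(n) = {x ∈ SG : ε(x) ∈ n}`. -/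
noncomputable def relAugIdeal (S : Type) [CommRing S] (nn : Ideal S) (G : Type) [Group G] :
    Ideal (MonoidAlgebra S G) := Ideal.comap (aug S G) nn

/-- `A = a - 1 ∈ SH`. -/
noncomputable def elA (S : Type) [CommRing S] (n m l : ℕ) : MonoidAlgebra S (GrpH n m l) :=
  MonoidAlgebra.of S (GrpH n m l) (PresentedGroup.of 0) - 1
/-- `B = b - 1 ∈ SH`. -/
noncomputable def elB (S : Type) [CommRing S] (n m l : ℕ) : MonoidAlgebra S (GrpH n m l) :=
  MonoidAlgebra.of S (GrpH n m l) (PresentedGroup.of 1) - 1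
/-- `C = c - 1 ∈ SH`. -/
noncomputable def elC (S : Type) [CommRing S] (n m l : ℕ) : MonoidAlgebra S (GrpH n m l) :=
  MonoidAlgebra.of S (GrpH n m l) (PresentedGroup.of 2) - 1

set_option maxHeartbeats 2000000

private theorem pow_mul_mem {R : Type} [Ring R] {Θ : Ideal R} :
    ∀ (j k : ℕ) {x y : R}, x ∈ Θ ^ j → y ∈ Θ ^ (k + 1) → x * y ∈ Θ ^ (j + k + 1) := by
  intro j k
  induction k with
  | zero =>
    intro x y hx hy
    rw [zero_add, Submodule.pow_one] at hy
    exact Submodule.mul_mem_mul hx hy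
  | succ k ih =>
    intro x y hx hy
    have hy' : y ∈ Θ ^ (k + 1) * Θ := by rw [← Submodule.pow_succ]; exact hy
    refine Submodule.mul_induction_on hy' (fun m hm n hn => ?_) (fun u v hu hv => ?_)
    · rw [← mul_assoc]
      exact Submodule.mul_mem_mul (ih hx hm) hn
    · rw [mul_add]
      exact add_mem hu hv

private theorem mem_pow_one {R : Type} [Ring R] {Θ : Ideal R} {x : R} (hx : x ∈ Θ) :
    x ∈ Θ ^ 1 := by rw [Submodule.pow_one]; exact hx

private theorem key2 {S : Type} [CommRing S] {R : Type} [Ring R] [Algebra S R] (Θ : Ideal R)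
    (oa ob oc oci : R) (htw : algebraMap S R 2 ∈ Θ)
    (hoa : oa - 1 ∈ Θ) (hob : ob - 1 ∈ Θ) (hoc : oc - 1 ∈ Θ) (hp : oa * ob - 1 ∈ Θ)
    (hC2 : oc - 1 ∈ Θ ^ 2)
    (W1 : ob * oa = oa * (ob * oc)) (W2 : oc * oa = oa * oci) (W3 : oc * ob = ob * oci)
    (W4 : oci * oa = oa * oc) (W5 : oci * ob = ob * oc)
    (W6 : oc * oci = 1) (W7 : oci * oc = 1)
    (hchar : (4 : S) = 0) (α β : S) :
    (α • (oa - 1) + β • (ob - 1)) ^ 4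
      - (α ^ 4 • (oa - 1) ^ 4 + β ^ 4 • (ob - 1) ^ 4 + (α ^ 2 * β ^ 2) • (oc - 1) ^ 2)
      ∈ Θ ^ 5 := by
  have W1' : ∀ x : R, ob * (oa * x) = oa * (ob * (oc * x)) := fun x => by
    rw [← mul_assoc, W1, mul_assoc, mul_assoc]
  have W2' : ∀ x : R, oc * (oa * x) = oa * (oci * x) := fun x => by
    rw [← mul_assoc, W2, mul_assoc]
  have W3' : ∀ x : R, oc * (ob * x) = ob * (oci * x) := fun x => by
    rw [← mul_assoc, W3, mul_assoc]
  have W4' : ∀ x : R, oci * (oa * x) = oa * (oc * x) := fun x => by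
    rw [← mul_assoc, W4, mul_assoc]
  have W5' : ∀ x : R, oci * (ob * x) = ob * (oc * x) := fun x => by
    rw [← mul_assoc, W5, mul_assoc]
  have W6' : ∀ x : R, oc * (oci * x) = x := fun x => by rw [← mul_assoc, W6, one_mul]
  have W7' : ∀ x : R, oci * (oc * x) = x := fun x => by rw [← mul_assoc, W7, one_mul]
  have hD : ob * oa - oa * ob ∈ Θ ^ 2 := by
    have e : ob * oa - oa * ob = (ob - 1) * (oa - 1) - (oa - 1) * (ob - 1) := by noncomm_ring
    rw [e]
    exact sub_mem (Submodule.mul_mem_mul (mem_pow_one hob) hoa)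
      (Submodule.mul_mem_mul (mem_pow_one hoa) hob)
  have hp4 : ∀ x : R, x ^ 4 = x * (x * (x * x)) := fun x => by
    rw [pow_succ, pow_succ, pow_succ, pow_one]
    rw [mul_assoc, mul_assoc]
  have hp2 : ∀ x : R, x ^ 2 = x * x := fun x => pow_two x
  -- Step A: regrouping of the expansion (pure module identity)
  have stepA : (α • (oa - 1) + β • (ob - 1)) ^ 4
      - (α ^ 4 • (oa - 1) ^ 4 + β ^ 4 • (ob - 1) ^ 4 + (α ^ 2 * β ^ 2) • (oc - 1) ^ 2)
      = (α ^ 3 * β) • ((oa-1)*((oa-1)*((oa-1)*(ob-1))) + (oa-1)*((oa-1)*((ob-1)*(oa-1)))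
          + (oa-1)*((ob-1)*((oa-1)*(oa-1))) + (ob-1)*((oa-1)*((oa-1)*(oa-1))))
      + (α * β ^ 3) • ((oa-1)*((ob-1)*((ob-1)*(ob-1))) + (ob-1)*((oa-1)*((ob-1)*(ob-1)))
          + (ob-1)*((ob-1)*((oa-1)*(ob-1))) + (ob-1)*((ob-1)*((ob-1)*(oa-1))))
      + (α ^ 2 * β ^ 2) • ((oa-1)*((oa-1)*((ob-1)*(ob-1))) + (oa-1)*((ob-1)*((oa-1)*(ob-1)))
          + (oa-1)*((ob-1)*((ob-1)*(oa-1))) + (ob-1)*((oa-1)*((oa-1)*(ob-1)))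
          + (ob-1)*((oa-1)*((ob-1)*(oa-1))) + (ob-1)*((ob-1)*((oa-1)*(oa-1)))
          - (oc-1)*(oc-1)) := by
    simp only [hp4, hp2, add_mul, mul_add, sub_mul, mul_sub, smul_add, smul_sub,
      smul_mul_assoc, mul_smul_comm, smul_smul, mul_assoc, one_mul, mul_one]
    match_scalars <;> ring1
  rw [stepA]
  have eq1 : (oa-1)*((oa-1)*((oa-1)*(ob-1))) + (oa-1)*((oa-1)*((ob-1)*(oa-1)))
      + (oa-1)*((ob-1)*((oa-1)*(oa-1))) + (ob-1)*((oa-1)*((oa-1)*(oa-1)))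
      = (2:S) • ((oa-1)*((ob*oa - oa*ob)*(oa-1))) := by
    simp only [sub_mul, mul_sub, add_mul, mul_add, smul_add, smul_sub, mul_one, one_mul,
      mul_assoc, W1, W1', W2, W2', W3, W3', W4, W4', W5, W5', W6, W6', W7, W7']
    match_scalars <;>
      first
        | ring1
        | linear_combination hchar
        | linear_combination 2 * hchar
        | linear_combination 3 * hchar
        | linear_combination 4 * hchar
        | linear_combination -hchar
        | linear_combination (-2 : S) * hchar
        | linear_combination (-3 : S) * hchar
        | linear_combination (-4 : S) * hchar
  have eq2 : (oa-1)*((ob-1)*((ob-1)*(ob-1))) + (ob-1)*((oa-1)*((ob-1)*(ob-1)))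
      + (ob-1)*((ob-1)*((oa-1)*(ob-1))) + (ob-1)*((ob-1)*((ob-1)*(oa-1)))
      = (2:S) • ((ob-1)*((ob*oa - oa*ob)*(ob-1)))
        + (2:S) • (((oa*(ob*(ob*oci)))*(oc-1))*((ob-1)*(oc-1)))
        + (2:S) • (((oa*(ob*ob))*(ob-1))*((oc-1)*(oc-1)))
        + (2:S) • (((oa*(ob*(ob*oci)))*(oc-1))*((oc-1)*(oc-1))) := by
    simp only [sub_mul, mul_sub, add_mul, mul_add, smul_add, smul_sub, mul_one, one_mul,
      mul_assoc, W1, W1', W2, W2', W3, W3', W4, W4', W5, W5', W6, W6', W7, W7']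
    match_scalars <;>
      first
        | ring1
        | linear_combination hchar
        | linear_combination 2 * hchar
        | linear_combination 3 * hchar
        | linear_combination 4 * hchar
        | linear_combination -hchar
        | linear_combination (-2 : S) * hchar
        | linear_combination (-3 : S) * hchar
        | linear_combination (-4 : S) * hchar
  have eq3 : (oa-1)*((oa-1)*((ob-1)*(ob-1))) + (oa-1)*((ob-1)*((oa-1)*(ob-1)))
      + (oa-1)*((ob-1)*((ob-1)*(oa-1))) + (ob-1)*((oa-1)*((oa-1)*(ob-1)))
      + (ob-1)*((oa-1)*((ob-1)*(oa-1))) + (ob-1)*((ob-1)*((oa-1)*(oa-1)))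
      - (oc-1)*(oc-1)
      = (2:S) • ((oa-1)*((oa-1)*((ob-1)*(ob-1))))
        + (2:S) • ((oa*(oa*(ob*(ob*oci))))*((oc-1)*((oc-1)*(oc-1))))
        - (2:S) • ((oa*(oa*(ob*ob)))*((oc-1)*(oc-1)))
        + (2:S) • ((ob*oa - oa*ob)*(ob*oa - oa*ob))
        + (ob*oa - oa*ob)*((oa*ob - 1)*(oc-1))
        + (oa*ob - 1)*((oc-1)*(oc-1)) := by
    simp only [sub_mul, mul_sub, add_mul, mul_add, smul_add, smul_sub, mul_one, one_mul,
      mul_assoc, W1, W1', W2, W2', W3, W3', W4, W4', W5, W5', W6, W6', W7, W7']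
    match_scalars <;>
      first
        | ring1
        | linear_combination hchar
        | linear_combination 2 * hchar
        | linear_combination 3 * hchar
        | linear_combination 4 * hchar
        | linear_combination -hchar
        | linear_combination (-2 : S) * hchar
        | linear_combination (-3 : S) * hchar
        | linear_combination (-4 : S) * hchar
  have hG1 : (oa-1)*((oa-1)*((oa-1)*(ob-1))) + (oa-1)*((oa-1)*((ob-1)*(oa-1)))
      + (oa-1)*((ob-1)*((oa-1)*(oa-1))) + (ob-1)*((oa-1)*((oa-1)*(oa-1))) ∈ Θ ^ 5 := by
    rw [eq1, Algebra.smul_def]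
    exact pow_mul_mem 1 3 (mem_pow_one htw)
      (pow_mul_mem 1 2 (mem_pow_one hoa) (pow_mul_mem 2 0 hD (mem_pow_one hoa)))
  have hw2C : (oa*(ob*(ob*oci)))*(oc-1) ∈ Θ ^ 2 := Ideal.mul_mem_left _ _ hC2
  have hG2 : (oa-1)*((ob-1)*((ob-1)*(ob-1))) + (ob-1)*((oa-1)*((ob-1)*(ob-1)))
      + (ob-1)*((ob-1)*((oa-1)*(ob-1))) + (ob-1)*((ob-1)*((ob-1)*(oa-1))) ∈ Θ ^ 5 := by
    rw [eq2, Algebra.smul_def, Algebra.smul_def, Algebra.smul_def, Algebra.smul_def]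
    refine add_mem (add_mem (add_mem ?_ ?_) ?_) ?_
    · exact pow_mul_mem 1 3 (mem_pow_one htw)
        (pow_mul_mem 1 2 (mem_pow_one hob) (pow_mul_mem 2 0 hD (mem_pow_one hob)))
    · exact pow_mul_mem 1 3 (mem_pow_one htw)
        (pow_mul_mem 2 1 hw2C (pow_mul_mem 1 0 (mem_pow_one hob) (mem_pow_one hoc)))
    · exact pow_mul_mem 1 3 (mem_pow_one htw)
        (pow_mul_mem 1 2 (mem_pow_one (Ideal.mul_mem_left _ _ hob))
          (pow_mul_mem 2 0 hC2 (mem_pow_one hoc)))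
    · exact pow_mul_mem 1 3 (mem_pow_one htw)
        (pow_mul_mem 2 1 hw2C (pow_mul_mem 1 0 (mem_pow_one hoc) (mem_pow_one hoc)))
  have hG3 : (oa-1)*((oa-1)*((ob-1)*(ob-1))) + (oa-1)*((ob-1)*((oa-1)*(ob-1)))
      + (oa-1)*((ob-1)*((ob-1)*(oa-1))) + (ob-1)*((oa-1)*((oa-1)*(ob-1)))
      + (ob-1)*((oa-1)*((ob-1)*(oa-1))) + (ob-1)*((ob-1)*((oa-1)*(oa-1)))
      - (oc-1)*(oc-1) ∈ Θ ^ 5 := by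
    rw [eq3, Algebra.smul_def, Algebra.smul_def, Algebra.smul_def, Algebra.smul_def]
    refine add_mem (add_mem (add_mem (sub_mem (add_mem ?_ ?_) ?_) ?_) ?_) ?_
    · exact pow_mul_mem 1 3 (mem_pow_one htw)
        (pow_mul_mem 1 2 (mem_pow_one hoa)
          (pow_mul_mem 1 1 (mem_pow_one hoa) (pow_mul_mem 1 0 (mem_pow_one hob) (mem_pow_one hob))))
    · exact pow_mul_mem 1 3 (mem_pow_one htw)
        (Ideal.mul_mem_left _ _
          (pow_mul_mem 2 1 hC2 (pow_mul_mem 1 0 (mem_pow_one hoc) (mem_pow_one hoc))))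
    · exact pow_mul_mem 1 3 (mem_pow_one htw)
        (Ideal.mul_mem_left _ _ (pow_mul_mem 2 1 hC2 hC2))
    · exact pow_mul_mem 1 3 (mem_pow_one htw) (pow_mul_mem 2 1 hD hD)
    · exact pow_mul_mem 2 2 hD (pow_mul_mem 1 1 (mem_pow_one hp) hC2)
    · exact pow_mul_mem 1 3 (mem_pow_one hp) (pow_mul_mem 2 1 hC2 hC2)
  rw [Algebra.smul_def, Algebra.smul_def, Algebra.smul_def]
  exact add_mem (add_mem (Ideal.mul_mem_left _ _ hG1) (Ideal.mul_mem_left _ _ hG2))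
    (Ideal.mul_mem_left _ _ hG3)

theorem stmt13 (n m l : ℕ) (h1 : n > m) (h2 : m > l) (h3 : 2 ≤ l)
    (S : Type) [CommRing S] (hchar : CharP S 4)
    (nn : Ideal S) (hnn : nn.IsMaximal) (h2n : (2 : S) ∈ nn) (h2n2 : (2 : S) ∉ nn ^ 2)
    (α β : S) :
    (α • elA S n m l + β • elB S n m l) ^ 4
      - (α ^ 4 • elA S n m l ^ 4 + β ^ 4 • elB S n m l ^ 4
          + (α ^ 2 * β ^ 2) • elC S n m l ^ 2)
      ∈ relAugIdeal S nn (GrpH n m l) ^ 5 := by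
  have hchar4 : (4 : S) = 0 := by
    have h := CharP.cast_eq_zero S 4
    exact_mod_cast h
  have hone : ∀ r ∈ hrels n m l, (PresentedGroup.mk (hrels n m l) r : GrpH n m l) = 1 :=
    fun r hr => (QuotientGroup.eq_one_iff r).mpr (Subgroup.subset_normalClosure hr)
  have hrel4 : ((PresentedGroup.of 1 : GrpH n m l))⁻¹ * (PresentedGroup.of 0)⁻¹
      * PresentedGroup.of 1 * PresentedGroup.of 0 * (PresentedGroup.of 2)⁻¹ = 1 := by
    have h := hone ((FreeGroup.of 1)⁻¹ * (FreeGroup.of 0)⁻¹ * FreeGroup.of 1 * FreeGroup.of 0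
      * (FreeGroup.of 2)⁻¹) (by simp [hrels])
    exact h
  have hrel5 : ((PresentedGroup.of 2 : GrpH n m l))⁻¹ * (PresentedGroup.of 0)⁻¹
      * PresentedGroup.of 2 * PresentedGroup.of 0 * PresentedGroup.of 2 ^ 2 = 1 := by
    have h := hone ((FreeGroup.of 2)⁻¹ * (FreeGroup.of 0)⁻¹ * FreeGroup.of 2 * FreeGroup.of 0
      * FreeGroup.of 2 ^ 2) (by simp [hrels])
    exact h
  have hrel6 : ((PresentedGroup.of 2 : GrpH n m l))⁻¹ * (PresentedGroup.of 1)⁻¹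
      * PresentedGroup.of 2 * PresentedGroup.of 1 * PresentedGroup.of 2 ^ 2 = 1 := by
    have h := hone ((FreeGroup.of 2)⁻¹ * (FreeGroup.of 1)⁻¹ * FreeGroup.of 2 * FreeGroup.of 1
      * FreeGroup.of 2 ^ 2) (by simp [hrels])
    exact h
  have hba : (PresentedGroup.of 1 : GrpH n m l) * PresentedGroup.of 0
      = PresentedGroup.of 0 * (PresentedGroup.of 1 * PresentedGroup.of 2) := by
    calc (PresentedGroup.of 1 : GrpH n m l) * PresentedGroup.of 0
        = (PresentedGroup.of 0 * PresentedGroup.of 1)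
          * ((PresentedGroup.of 1)⁻¹ * (PresentedGroup.of 0)⁻¹ * PresentedGroup.of 1
              * PresentedGroup.of 0 * (PresentedGroup.of 2)⁻¹) * PresentedGroup.of 2 := by
            group
      _ = PresentedGroup.of 0 * (PresentedGroup.of 1 * PresentedGroup.of 2) := by
            rw [hrel4]; group
  have hca : (PresentedGroup.of 2 : GrpH n m l) * PresentedGroup.of 0
      = PresentedGroup.of 0 * (PresentedGroup.of 2)⁻¹ := by
    calc (PresentedGroup.of 2 : GrpH n m l) * PresentedGroup.of 0
        = (PresentedGroup.of 0 * PresentedGroup.of 2)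
          * ((PresentedGroup.of 2)⁻¹ * (PresentedGroup.of 0)⁻¹ * PresentedGroup.of 2
              * PresentedGroup.of 0 * PresentedGroup.of 2 ^ 2) * (PresentedGroup.of 2 ^ 2)⁻¹ := by
            group
      _ = PresentedGroup.of 0 * (PresentedGroup.of 2)⁻¹ := by
            rw [hrel5]; group
  have hcb : (PresentedGroup.of 2 : GrpH n m l) * PresentedGroup.of 1
      = PresentedGroup.of 1 * (PresentedGroup.of 2)⁻¹ := by
    calc (PresentedGroup.of 2 : GrpH n m l) * PresentedGroup.of 1
        = (PresentedGroup.of 1 * PresentedGroup.of 2)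
          * ((PresentedGroup.of 2)⁻¹ * (PresentedGroup.of 1)⁻¹ * PresentedGroup.of 2
              * PresentedGroup.of 1 * PresentedGroup.of 2 ^ 2) * (PresentedGroup.of 2 ^ 2)⁻¹ := by
            group
      _ = PresentedGroup.of 1 * (PresentedGroup.of 2)⁻¹ := by
            rw [hrel6]; group
  have hia : ((PresentedGroup.of 2 : GrpH n m l))⁻¹ * PresentedGroup.of 0
      = PresentedGroup.of 0 * PresentedGroup.of 2 := by
    calc ((PresentedGroup.of 2 : GrpH n m l))⁻¹ * PresentedGroup.of 0
        = (PresentedGroup.of 2)⁻¹ * (PresentedGroup.of 0 * (PresentedGroup.of 2)⁻¹)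
            * PresentedGroup.of 2 := by group
      _ = (PresentedGroup.of 2)⁻¹ * (PresentedGroup.of 2 * PresentedGroup.of 0)
            * PresentedGroup.of 2 := by rw [hca]
      _ = PresentedGroup.of 0 * PresentedGroup.of 2 := by group
  have hib : ((PresentedGroup.of 2 : GrpH n m l))⁻¹ * PresentedGroup.of 1
      = PresentedGroup.of 1 * PresentedGroup.of 2 := by
    calc ((PresentedGroup.of 2 : GrpH n m l))⁻¹ * PresentedGroup.of 1
        = (PresentedGroup.of 2)⁻¹ * (PresentedGroup.of 1 * (PresentedGroup.of 2)⁻¹)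
            * PresentedGroup.of 2 := by group
      _ = (PresentedGroup.of 2)⁻¹ * (PresentedGroup.of 2 * PresentedGroup.of 1)
            * PresentedGroup.of 2 := by rw [hcb]
      _ = PresentedGroup.of 1 * PresentedGroup.of 2 := by group
  -- ring-level word relations
  have W1 : (MonoidAlgebra.of S (GrpH n m l)) (PresentedGroup.of 1)
        * (MonoidAlgebra.of S (GrpH n m l)) (PresentedGroup.of 0)
      = (MonoidAlgebra.of S (GrpH n m l)) (PresentedGroup.of 0)
        * ((MonoidAlgebra.of S (GrpH n m l)) (PresentedGroup.of 1)
          * (MonoidAlgebra.of S (GrpH n m l)) (PresentedGroup.of 2)) := by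
    exact (map_mul (MonoidAlgebra.of S (GrpH n m l)) _ _).symm.trans ((congrArg (MonoidAlgebra.of S (GrpH n m l)) hba).trans
      ((map_mul (MonoidAlgebra.of S (GrpH n m l)) _ _).trans (congrArg _ (map_mul (MonoidAlgebra.of S (GrpH n m l)) _ _))))
  have W2 : (MonoidAlgebra.of S (GrpH n m l)) (PresentedGroup.of 2)
        * (MonoidAlgebra.of S (GrpH n m l)) (PresentedGroup.of 0)
      = (MonoidAlgebra.of S (GrpH n m l)) (PresentedGroup.of 0)
        * (MonoidAlgebra.of S (GrpH n m l)) ((PresentedGroup.of 2)⁻¹) := by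
    exact (map_mul (MonoidAlgebra.of S (GrpH n m l)) _ _).symm.trans ((congrArg (MonoidAlgebra.of S (GrpH n m l)) hca).trans (map_mul (MonoidAlgebra.of S (GrpH n m l)) _ _))
  have W3 : (MonoidAlgebra.of S (GrpH n m l)) (PresentedGroup.of 2)
        * (MonoidAlgebra.of S (GrpH n m l)) (PresentedGroup.of 1)
      = (MonoidAlgebra.of S (GrpH n m l)) (PresentedGroup.of 1)
        * (MonoidAlgebra.of S (GrpH n m l)) ((PresentedGroup.of 2)⁻¹) := by
    exact (map_mul (MonoidAlgebra.of S (GrpH n m l)) _ _).symm.trans ((congrArg (MonoidAlgebra.of S (GrpH n m l)) hcb).trans (map_mul (MonoidAlgebra.of S (GrpH n m l)) _ _))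
  have W4 : (MonoidAlgebra.of S (GrpH n m l)) ((PresentedGroup.of 2)⁻¹)
        * (MonoidAlgebra.of S (GrpH n m l)) (PresentedGroup.of 0)
      = (MonoidAlgebra.of S (GrpH n m l)) (PresentedGroup.of 0)
        * (MonoidAlgebra.of S (GrpH n m l)) (PresentedGroup.of 2) := by
    exact (map_mul (MonoidAlgebra.of S (GrpH n m l)) _ _).symm.trans ((congrArg (MonoidAlgebra.of S (GrpH n m l)) hia).trans (map_mul (MonoidAlgebra.of S (GrpH n m l)) _ _))
  have W5 : (MonoidAlgebra.of S (GrpH n m l)) ((PresentedGroup.of 2)⁻¹)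
        * (MonoidAlgebra.of S (GrpH n m l)) (PresentedGroup.of 1)
      = (MonoidAlgebra.of S (GrpH n m l)) (PresentedGroup.of 1)
        * (MonoidAlgebra.of S (GrpH n m l)) (PresentedGroup.of 2) := by
    exact (map_mul (MonoidAlgebra.of S (GrpH n m l)) _ _).symm.trans ((congrArg (MonoidAlgebra.of S (GrpH n m l)) hib).trans (map_mul (MonoidAlgebra.of S (GrpH n m l)) _ _))
  have W6 : (MonoidAlgebra.of S (GrpH n m l)) (PresentedGroup.of 2)
        * (MonoidAlgebra.of S (GrpH n m l)) ((PresentedGroup.of 2)⁻¹) = 1 := by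
    exact (map_mul (MonoidAlgebra.of S (GrpH n m l)) _ _).symm.trans ((congrArg (MonoidAlgebra.of S (GrpH n m l)) (mul_inv_cancel _)).trans (map_one (MonoidAlgebra.of S (GrpH n m l))))
  have W7 : (MonoidAlgebra.of S (GrpH n m l)) ((PresentedGroup.of 2)⁻¹)
        * (MonoidAlgebra.of S (GrpH n m l)) (PresentedGroup.of 2) = 1 := by
    exact (map_mul (MonoidAlgebra.of S (GrpH n m l)) _ _).symm.trans ((congrArg (MonoidAlgebra.of S (GrpH n m l)) (inv_mul_cancel _)).trans (map_one (MonoidAlgebra.of S (GrpH n m l))))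
  -- membership facts
  have hof : ∀ g : GrpH n m l,
      (MonoidAlgebra.of S (GrpH n m l)) g - 1 ∈ relAugIdeal S nn (GrpH n m l) := by
    intro g
    show _ ∈ Ideal.comap (aug S (GrpH n m l)) nn
    rw [Ideal.mem_comap, map_sub, map_one]
    have h1 : (aug S (GrpH n m l)) ((MonoidAlgebra.of S (GrpH n m l)) g) = 1 := by
      simp [aug]
    rw [h1, sub_self]
    exact zero_mem nn
  have htw : algebraMap S (MonoidAlgebra S (GrpH n m l)) 2 ∈ relAugIdeal S nn (GrpH n m l) := by
    show _ ∈ Ideal.comap (aug S (GrpH n m l)) nn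
    rw [Ideal.mem_comap, AlgHom.commutes]
    exact h2n
  have hp : (MonoidAlgebra.of S (GrpH n m l)) (PresentedGroup.of 0)
      * (MonoidAlgebra.of S (GrpH n m l)) (PresentedGroup.of 1) - 1
      ∈ relAugIdeal S nn (GrpH n m l) := by
    exact (congrArg (· ∈ relAugIdeal S nn (GrpH n m l))
        (congrArg (· - 1) (map_mul (MonoidAlgebra.of S (GrpH n m l)) _ _).symm)).mpr (hof _)
  have hC2 : (MonoidAlgebra.of S (GrpH n m l)) (PresentedGroup.of 2) - 1
      ∈ relAugIdeal S nn (GrpH n m l) ^ 2 := by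
    have hD2 : (MonoidAlgebra.of S (GrpH n m l)) (PresentedGroup.of 1)
          * (MonoidAlgebra.of S (GrpH n m l)) (PresentedGroup.of 0)
        - (MonoidAlgebra.of S (GrpH n m l)) (PresentedGroup.of 0)
          * (MonoidAlgebra.of S (GrpH n m l)) (PresentedGroup.of 1)
        ∈ relAugIdeal S nn (GrpH n m l) ^ 2 := by
      have e : (MonoidAlgebra.of S (GrpH n m l)) (PresentedGroup.of 1)
            * (MonoidAlgebra.of S (GrpH n m l)) (PresentedGroup.of 0)
          - (MonoidAlgebra.of S (GrpH n m l)) (PresentedGroup.of 0)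
            * (MonoidAlgebra.of S (GrpH n m l)) (PresentedGroup.of 1)
          = ((MonoidAlgebra.of S (GrpH n m l)) (PresentedGroup.of 1) - 1)
              * ((MonoidAlgebra.of S (GrpH n m l)) (PresentedGroup.of 0) - 1)
            - ((MonoidAlgebra.of S (GrpH n m l)) (PresentedGroup.of 0) - 1)
              * ((MonoidAlgebra.of S (GrpH n m l)) (PresentedGroup.of 1) - 1) := by
        noncomm_ring
      rw [e]
      exact sub_mem (Submodule.mul_mem_mul (mem_pow_one (hof _)) (hof _))
        (Submodule.mul_mem_mul (mem_pow_one (hof _)) (hof _))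
    have e1 : (((PresentedGroup.of 0 : GrpH n m l) * (PresentedGroup.of 1 : GrpH n m l))⁻¹
        * ((PresentedGroup.of 1 : GrpH n m l) * (PresentedGroup.of 0 : GrpH n m l))) = PresentedGroup.of 2 := by
      rw [hba]; group
    have e2 : (((PresentedGroup.of 0 : GrpH n m l) * (PresentedGroup.of 1 : GrpH n m l))⁻¹
        * ((PresentedGroup.of 0 : GrpH n m l) * (PresentedGroup.of 1 : GrpH n m l))) = 1 := inv_mul_cancel _
    have e3 : (MonoidAlgebra.of S (GrpH n m l)) (((PresentedGroup.of 0 : GrpH n m l) * (PresentedGroup.of 1 : GrpH n m l))⁻¹)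
        * ((MonoidAlgebra.of S (GrpH n m l)) (PresentedGroup.of 1)
            * (MonoidAlgebra.of S (GrpH n m l)) (PresentedGroup.of 0)
          - (MonoidAlgebra.of S (GrpH n m l)) (PresentedGroup.of 0)
            * (MonoidAlgebra.of S (GrpH n m l)) (PresentedGroup.of 1))
        = (MonoidAlgebra.of S (GrpH n m l)) (PresentedGroup.of 2) - 1 := by
      exact (mul_sub _ _ _).trans (congrArg₂ (· - ·)
        (((congrArg (_ * ·) (map_mul (MonoidAlgebra.of S (GrpH n m l)) _ _).symm).trans (map_mul (MonoidAlgebra.of S (GrpH n m l)) _ _).symm).trans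
          (congrArg (MonoidAlgebra.of S (GrpH n m l)) e1))
        (((congrArg (_ * ·) (map_mul (MonoidAlgebra.of S (GrpH n m l)) _ _).symm).trans (map_mul (MonoidAlgebra.of S (GrpH n m l)) _ _).symm).trans
          ((congrArg (MonoidAlgebra.of S (GrpH n m l)) e2).trans (map_one (MonoidAlgebra.of S (GrpH n m l))))))
    rw [← e3]
    exact Ideal.mul_mem_left _ _ hD2
  simp only [elA, elB, elC]
  exact key2 (relAugIdeal S nn (GrpH n m l))
    ((MonoidAlgebra.of S (GrpH n m l)) (PresentedGroup.of 0))
    ((MonoidAlgebra.of S (GrpH n m l)) (PresentedGroup.of 1))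
    ((MonoidAlgebra.of S (GrpH n m l)) (PresentedGroup.of 2))
    ((MonoidAlgebra.of S (GrpH n m l)) ((PresentedGroup.of 2)⁻¹))
    htw (hof _) (hof _) (hof _) hp hC2 W1 W2 W3 W4 W5 W6 W7 hchar4 α β
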